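/- Let (Ω, μ) be a probability space, let T and S be finite sets, let τ : S → T with every fiber τ⁻¹(t) of cardinality N > 0, let λ : T → Ω → ℝ and π : S → Ω → ℝ be families of integrable random variables, and let c ∈ ℝ. Let D ⊆ (T → ℝ) × (T → ℝ) be a nonempty set of feasible day-ahead decisions (pD, bD) and R ⊆ (S → ℝ) × (S → ℝ) a nonempty set of feasible real-time decisions (pR, bR). Define π̄_t := (1/N) · E[ Σ_{s ∈ S, τ(s) = t} π_s ], the joint objective F(pD, bD, pR, bR) := E[ Σ_{t ∈ T} λ_t (pD_t − bD_t) − Σ_{s ∈ S} c · pR_s + Σ_{s ∈ S} π_s ( pR_s − bR_s − (pD_{τ(s)} − bD_{τ(s)})/N ) ], the day-ahead objective F_D(pD, bD) := Σ_{t ∈ T} ( E[λ_t] − π̄_t ) (pD_t − bD_t), and the real-time objective F_R(pR, bR) := E[ Σ_{s ∈ S} π_s (pR_s − bR_s) ] − Σ_{s ∈ S} c · pR_s. Assume the image of F_D on D and the image of F_R on R are bounded above. Then sup over ((pD, bD), (pR, bR)) ∈ D × R of F equals ( sup over D of F_D ) + ( sup over R of F_R ). -/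

import Mathlib

open MeasureTheory Finset
open scoped Pointwise

/-- Proposition 2 (two-stage reformulation): under the price-taker assumption
and with a product feasible set `D ×ˢ R`, the two-settlement storage arbitrage
problem separates into a day-ahead bidding problem with bidding cost equal to
the expected hourly average real-time price and a real-time arbitrage problem
that ignores day-ahead results. -/
theorem two_stage_reformulation
    {Ω : Type*} [MeasurableSpace Ω] (μ : Measure Ω) [IsProbabilityMeasure μ]
    {T S : Type*} [Fintype T] [Fintype S] [DecidableEq T]
    (τ : S → T) (N : ℕ) (hN : 0 < N)
    (hfiber : ∀ t : T, (Finset.univ.filter (fun s => τ s = t)).card = N)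
    (lam : T → Ω → ℝ) (hlam : ∀ t, Integrable (lam t) μ)
    (π : S → Ω → ℝ) (hπ : ∀ s, Integrable (π s) μ)
    (c : ℝ)
    (D : Set ((T → ℝ) × (T → ℝ))) (R : Set ((S → ℝ) × (S → ℝ)))
    (hD : D.Nonempty) (hR : R.Nonempty)
    (piBar : T → ℝ)
    (hpiBar : ∀ t, piBar t
      = (1 / (N : ℝ)) * ∫ ω, (∑ s ∈ Finset.univ.filter (fun s => τ s = t), π s ω) ∂μ)
    (F : ((T → ℝ) × (T → ℝ)) → ((S → ℝ) × (S → ℝ)) → ℝ)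
    (hF : ∀ d r, F d r
      = ∫ ω, (∑ t : T, lam t ω * (d.1 t - d.2 t)
          - ∑ s : S, c * r.1 s
          + ∑ s : S, π s ω * (r.1 s - r.2 s - (d.1 (τ s) - d.2 (τ s)) / (N : ℝ))) ∂μ)
    (FD : ((T → ℝ) × (T → ℝ)) → ℝ)
    (hFD : ∀ d, FD d = ∑ t : T, ((∫ ω, lam t ω ∂μ) - piBar t) * (d.1 t - d.2 t))
    (FR : ((S → ℝ) × (S → ℝ)) → ℝ)
    (hFR : ∀ r, FR r
      = (∫ ω, ∑ s : S, π s ω * (r.1 s - r.2 s) ∂μ) - ∑ s : S, c * r.1 s)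
    (hbddD : BddAbove (FD '' D)) (hbddR : BddAbove (FR '' R)) :
    sSup ((fun q : ((T → ℝ) × (T → ℝ)) × ((S → ℝ) × (S → ℝ)) => F q.1 q.2) '' (D ×ˢ R))
      = sSup (FD '' D) + sSup (FR '' R) := by
    -- Step 1: F separates as FD + FR on all inputs.
  have key : ∀ d r, F d r = FD d + FR r := by
    intro d r
    have hI1 : Integrable (fun ω => ∑ t : T, lam t ω * (d.1 t - d.2 t)) μ :=
      integrable_finset_sum _ fun t _ => (hlam t).mul_const _
    have hI3 : Integrable (fun ω => ∑ s : S,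
        π s ω * (r.1 s - r.2 s - (d.1 (τ s) - d.2 (τ s)) / (N : ℝ))) μ :=
      integrable_finset_sum _ fun s _ => (hπ s).mul_const _
    have hIπ : Integrable (fun ω => ∑ s : S, π s ω * (r.1 s - r.2 s)) μ :=
      integrable_finset_sum _ fun s _ => (hπ s).mul_const _
    have hI12 : Integrable (fun ω => (∑ t : T, lam t ω * (d.1 t - d.2 t))
        - ∑ s : S, c * r.1 s) μ := hI1.sub (integrable_const _)
    rw [hF, hFD, hFR]
    rw [integral_add hI12 hI3,
        integral_sub hI1 (integrable_const _), integral_const,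
        integral_finset_sum _ (fun t _ => (hlam t).mul_const _),
        integral_finset_sum _ (fun s _ => (hπ s).mul_const _),
        integral_finset_sum _ (fun s _ => (hπ s).mul_const _)]
    simp only [integral_mul_const, measure_univ, probReal_univ, ENNReal.toReal_one, smul_eq_mul, one_mul]
    -- reduce to an algebraic identity about sums
    have hsplit : ∀ s : S,
        (∫ ω, π s ω ∂μ) * (r.1 s - r.2 s - (d.1 (τ s) - d.2 (τ s)) / (N : ℝ))
        = (∫ ω, π s ω ∂μ) * (r.1 s - r.2 s)
          - (∫ ω, π s ω ∂μ) * ((d.1 (τ s) - d.2 (τ s)) / (N : ℝ)) := by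
      intro s; ring
    rw [Finset.sum_congr rfl fun s _ => hsplit s, Finset.sum_sub_distrib]
    have hfib : (∑ s : S, (∫ ω, π s ω ∂μ) * ((d.1 (τ s) - d.2 (τ s)) / (N : ℝ)))
        = ∑ t : T, piBar t * (d.1 t - d.2 t) := by
      rw [← Finset.sum_fiberwise Finset.univ τ (fun s =>
        (∫ ω, π s ω ∂μ) * ((d.1 (τ s) - d.2 (τ s)) / (N : ℝ)))]
      refine Finset.sum_congr rfl fun t _ => ?_
      have h1 : ∀ s ∈ Finset.univ.filter (fun s => τ s = t),
          (∫ ω, π s ω ∂μ) * ((d.1 (τ s) - d.2 (τ s)) / (N : ℝ))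
          = (∫ ω, π s ω ∂μ) * ((d.1 t - d.2 t) / (N : ℝ)) := by
        intro s hs
        rw [Finset.mem_filter] at hs
        rw [hs.2]
      rw [Finset.sum_congr rfl h1, ← Finset.sum_mul, hpiBar t,
          integral_finset_sum _ (fun s _ => hπ s)]
      have hNne : (N : ℝ) ≠ 0 := Nat.cast_ne_zero.mpr hN.ne'
      field_simp
    rw [hfib]
    have hexp : ∑ t : T, ((∫ ω, lam t ω ∂μ) - piBar t) * (d.1 t - d.2 t)
        = (∑ t : T, ((∫ ω, lam t ω ∂μ) * d.1 t - (∫ ω, lam t ω ∂μ) * d.2 t))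
          - ∑ t : T, piBar t * (d.1 t - d.2 t) := by
      rw [← Finset.sum_sub_distrib]
      exact Finset.sum_congr rfl fun t _ => by ring
    rw [hexp]
    ring
  -- Step 2: the image over the product is the pointwise sum of images.
  have himg : (fun q : ((T → ℝ) × (T → ℝ)) × ((S → ℝ) × (S → ℝ)) => F q.1 q.2) '' (D ×ˢ R)
      = (FD '' D) + (FR '' R) := by
    rw [← Set.image2_add, Set.image2_image_left, Set.image2_image_right, ← Set.image_prod]
    exact Set.image_congr fun q _ => key q.1 q.2
  rw [himg]
  exact csSup_add (hD.image _) hbddD (hR.image _) hbddR
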